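/- Let t ↦ ν(t) be a nontrivial weak solution of the isotropic 3-wave kinetic equation for acoustic waves with initial datum ν₀ satisfying ν₀({0}) = 0, and set E = ν₀([0,∞]). Then for every ε ∈ (0,1) there exists R_ε > 0 such that ν(t)([0, R_ε)) ≤ ε·E for all t ∈ [0,∞); that is, the energy is transferred away from the origin uniformly in time. -/

import Mathlib

open MeasureTheory Filter Topology
open scoped ENNReal NNReal

noncomputable section

/-- The functional `H¹_φ(p₁,p₂)`. -/
def H1 (φ : ℝ → ℝ) (p₁ p₂ : ℝ) : ℝ :=
  (p₁ + p₂) ^ 3 * φ (p₁ + p₂) - 2 * (p₁ ^ 3 + p₁ * p₂ ^ 2) * φ p₁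
    - 4 * p₁ * p₂ ^ 2 * φ p₂ + (p₁ - p₂) ^ 3 * φ (p₁ - p₂)

/-- The functional `H²_φ(p₁,p₂)`. -/
def H2 (φ : ℝ → ℝ) (p₁ p₂ : ℝ) : ℝ :=
  (p₁ + p₂) ^ 2 * ((p₁ + p₂) * φ (p₁ + p₂) - p₁ * φ p₁ - p₂ * φ p₂)

def rho (z : ℝ≥0∞) : ℝ := ((1+z)⁻¹).toReal
def th (z : ℝ≥0∞) : ℝ := ((1+z⁻¹)⁻¹).toReal
def th2 (z : ℝ≥0∞) : ℝ := ((2+z⁻¹)⁻¹).toReal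
def mm (x y : ℝ≥0∞) : ℝ := (min x y * (max x y)⁻¹).toReal

lemma cont_toReal_comp {α : Type*} [TopologicalSpace α] {f : α → ℝ≥0∞}
    (hf : Continuous f) (h : ∀ x, f x ≠ ∞) : Continuous fun x => (f x).toReal :=
  continuous_iff_continuousAt.2 fun x => (ENNReal.tendsto_toReal (h x)).comp hf.continuousAt

lemma rho_cont : Continuous rho := by
  apply cont_toReal_comp ((continuous_const.add continuous_id).inv)
  intro x; simp [ENNReal.inv_ne_top]

lemma th_cont : Continuous th := by
  apply cont_toReal_comp ((continuous_const.add continuous_inv).inv)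
  intro x
  show (1 + x⁻¹)⁻¹ ≠ ∞
  rw [ENNReal.inv_ne_top]
  simp [add_eq_zero]

lemma th2_cont : Continuous th2 := by
  apply cont_toReal_comp ((continuous_const.add continuous_inv).inv)
  intro x
  show (2 + x⁻¹)⁻¹ ≠ ∞
  rw [ENNReal.inv_ne_top]
  simp [add_eq_zero]

lemma rho_nonneg (z : ℝ≥0∞) : 0 ≤ rho z := ENNReal.toReal_nonneg
lemma th_nonneg (z : ℝ≥0∞) : 0 ≤ th z := ENNReal.toReal_nonneg
lemma th2_nonneg (z : ℝ≥0∞) : 0 ≤ th2 z := ENNReal.toReal_nonneg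
lemma mm_nonneg (x y : ℝ≥0∞) : 0 ≤ mm x y := ENNReal.toReal_nonneg

lemma rho_le_one (z : ℝ≥0∞) : rho z ≤ 1 := by
  rw [rho, show (1:ℝ) = ENNReal.toReal 1 by simp]
  apply ENNReal.toReal_mono (by simp)
  exact ENNReal.inv_le_one.mpr le_self_add

lemma th_le_one (z : ℝ≥0∞) : th z ≤ 1 := by
  rw [th, show (1:ℝ) = ENNReal.toReal 1 by simp]
  apply ENNReal.toReal_mono (by simp)
  exact ENNReal.inv_le_one.mpr le_self_add

lemma mm_le_one (x y : ℝ≥0∞) : mm x y ≤ 1 := by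
  rw [mm, show (1:ℝ) = ENNReal.toReal 1 by simp]
  apply ENNReal.toReal_mono (by simp)
  rcases eq_or_ne (max x y) 0 with h | h
  · have : min x y = 0 := le_antisymm (h ▸ min_le_max) bot_le
    simp [this]
  · rcases eq_or_ne (max x y) ∞ with h' | h'
    · simp [h']
    · calc min x y * (max x y)⁻¹ ≤ max x y * (max x y)⁻¹ :=
            mul_le_mul_left min_le_max _
        _ = 1 := ENNReal.mul_inv_cancel h h'

lemma rho_ofReal {p : ℝ} (hp : 0 ≤ p) : rho (ENNReal.ofReal p) = 1/(1+p) := by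
  rw [rho, show (1:ℝ≥0∞) = ENNReal.ofReal 1 by simp, ← ENNReal.ofReal_add (by norm_num) hp,
    ← ENNReal.ofReal_inv_of_pos (by linarith), ENNReal.toReal_ofReal (by positivity), one_div]

lemma th_ofReal {p : ℝ} (hp : 0 < p) : th (ENNReal.ofReal p) = p/(1+p) := by
  rw [th, ← ENNReal.ofReal_inv_of_pos hp,
    show (1:ℝ≥0∞) = ENNReal.ofReal 1 by simp, ← ENNReal.ofReal_add (by norm_num) (by positivity),
    ← ENNReal.ofReal_inv_of_pos (by positivity), ENNReal.toReal_ofReal (by positivity)]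
  rw [show (1:ℝ)+p⁻¹ = (1+p)/p by field_simp; ring, inv_div]

lemma th2_ofReal {p : ℝ} (hp : 0 < p) : th2 (ENNReal.ofReal p) = p/(1+2*p) := by
  rw [th2, ← ENNReal.ofReal_inv_of_pos hp,
    show (2:ℝ≥0∞) = ENNReal.ofReal 2 by simp [ENNReal.ofReal_ofNat],
    ← ENNReal.ofReal_add (by norm_num) (by positivity),
    ← ENNReal.ofReal_inv_of_pos (by positivity), ENNReal.toReal_ofReal (by positivity)]
  rw [show (2:ℝ)+p⁻¹ = (1+2*p)/p by field_simp; ring, inv_div]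

lemma th_zero : th 0 = 0 := by simp [th]
lemma th2_zero : th2 0 = 0 := by simp [th2]
lemma rho_top : rho ∞ = 0 := by simp [rho]

lemma mm_ofReal {a b : ℝ} (hb : 0 ≤ b) (hba : b ≤ a) :
    mm (ENNReal.ofReal a) (ENNReal.ofReal b) = b / a := by
  rw [mm, min_eq_right (ENNReal.ofReal_le_ofReal hba), max_eq_left (ENNReal.ofReal_le_ofReal hba),
    ENNReal.toReal_mul, ENNReal.toReal_inv, ENNReal.toReal_ofReal hb,
    ENNReal.toReal_ofReal (hb.trans hba), div_eq_mul_inv]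
lemma form_eq {A B : ℝ} (hB : 0 < B) (hBA : B < A) :
    2*(1/(1+(A-B)) - 1/(1+(A+B)))*(1/(1+A))
      + 2*((B/A)*((A-B)/(1+(A-B)))*((A+B)/(1+(A+B))))*(1/(1+A))
      - 4*(B/(1+B))
    = H1 (fun p => 1/(1+p)) A B / (A*B) := by
  have hA : 0 < A := hB.trans hBA
  have h1 : (0:ℝ) < 1 + A := by linarith
  have h2 : (0:ℝ) < 1 + B := by linarith
  have h3 : (0:ℝ) < 1 + (A+B) := by linarith
  have h4 : (0:ℝ) < 1 + (A-B) := by linarith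
  simp only [H1]
  field_simp
  ring

lemma H1_scale {c a b : ℝ} (hc : c ≠ 0) :
    H1 (fun p => 1/(1+c*p)) a b = (c⁻¹)^3 * H1 (fun p => 1/(1+p)) (c*a) (c*b) := by
  simp only [H1]
  rw [show c*(a+b) = c*a+c*b by ring, show c*(a-b) = c*a-c*b by ring]
  field_simp

lemma H2_scale {c a b : ℝ} (hc : c ≠ 0) :
    H2 (fun p => 1/(1+c*p)) a b = (c⁻¹)^3 * H2 (fun p => 1/(1+p)) (c*a) (c*b) := by
  simp only [H2]
  rw [show c*(a+b) = c*a+c*b by ring]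
  field_simp

lemma H1_one_nonpos {A B : ℝ} (hB : 0 < B) (hBA : B < A) :
    H1 (fun p => 1/(1+p)) A B ≤ 0 := by
  have hA : 0 < A := hB.trans hBA
  have h1 : (0:ℝ) < 1 + A := by linarith
  have h2 : (0:ℝ) < 1 + B := by linarith
  have h3 : (0:ℝ) < 1 + (A+B) := by linarith
  have h4 : (0:ℝ) < 1 + (A-B) := by linarith
  have key : (A^2-B^2+2*A)*(1+B) ≤ 2*A*(1+A)*((1+A)^2-B^2) := by
    nlinarith [sq_nonneg B, mul_pos hB hA, sq_nonneg (A-B), mul_pos hA h1,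
      mul_nonneg (mul_nonneg hB.le hB.le) hA.le]
  have hval : H1 (fun p => 1/(1+p)) A B
      = (2*B^2*((A^2-B^2+2*A)*(1+B) - 2*A*(1+A)*((1+A)^2-B^2)))
          / ((1+A)*(1+(A+B))*(1+(A-B))*(1+B)) := by
    simp only [H1]
    field_simp
    ring
  rw [hval]
  apply div_nonpos_of_nonpos_of_nonneg
  · nlinarith [sq_nonneg B]
  · exact le_of_lt (by positivity)
def Kone (x y : ℝ≥0∞) : ℝ :=
  2*(rho (max x y - min x y) - rho (x+y)) * rho (max x y)
   + 2*(mm x y * th (max x y - min x y) * th (x+y)) * rho (max x y)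
   - 4 * th (min x y)

def Ktwo (x : ℝ≥0∞) : ℝ := -8 * (th2 x * th x)

lemma Ktwo_nonpos (x : ℝ≥0∞) : Ktwo x ≤ 0 := by
  have := th2_nonneg x; have := th_nonneg x
  simp only [Ktwo]; nlinarith

lemma Kone_ofReal {A B : ℝ} (hB : 0 < B) (hBA : B < A) :
    Kone (ENNReal.ofReal A) (ENNReal.ofReal B) = H1 (fun p => 1/(1+p)) A B / (A*B) := by
  have hA : 0 < A := hB.trans hBA
  have hle : ENNReal.ofReal B ≤ ENNReal.ofReal A := ENNReal.ofReal_le_ofReal hBA.le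
  rw [Kone, max_eq_left hle, min_eq_right hle, ← ENNReal.ofReal_sub A hB.le,
    ← ENNReal.ofReal_add hA.le hB.le, mm_ofReal hB.le hBA.le,
    rho_ofReal (by linarith), rho_ofReal (by linarith), rho_ofReal hA.le,
    th_ofReal (by linarith), th_ofReal (by linarith), th_ofReal hB]
  exact form_eq hB hBA

lemma Ktwo_ofReal {p : ℝ} (hp : 0 < p) :
    Ktwo (ENNReal.ofReal p) = H2 (fun q => 1/(1+q)) p p / (p*p) := by
  rw [Ktwo, th2_ofReal hp, th_ofReal hp]
  have h1 : (0:ℝ) < 1 + p := by linarith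
  have h2 : (0:ℝ) < 1 + 2*p := by linarith
  simp only [H2]
  rw [show p + p = 2*p by ring]
  field_simp
  ring

lemma Kone_nonpos {x y : ℝ≥0∞} (h : y < x) : Kone x y ≤ 0 := by
  rcases eq_or_ne x ∞ with hx | hx
  · subst hx
    have hmax : max ⊤ y = (⊤:ℝ≥0∞) := max_eq_left le_top
    have hmin : min ⊤ y = y := min_eq_right le_top
    simp only [Kone, hmax, hmin, rho_top, mul_zero, zero_add, zero_sub,
      neg_nonpos]
    have := th_nonneg y; linarith
  · rcases eq_or_ne y 0 with hy | hy
    · subst hy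
      have hmax : max x 0 = x := max_eq_left bot_le
      have hmin : min x 0 = (0:ℝ≥0∞) := min_eq_right bot_le
      simp [Kone, hmax, hmin, th_zero, mm]
    · have hyt : y ≠ ∞ := (h.trans_le le_top).ne
      set A := x.toReal; set B := y.toReal
      have hB : 0 < B := ENNReal.toReal_pos hy hyt
      have hBA : B < A := by
        apply ENNReal.toReal_lt_toReal hyt hx |>.mpr h
      have hx' : x = ENNReal.ofReal A := (ENNReal.ofReal_toReal hx).symm
      have hy' : y = ENNReal.ofReal B := (ENNReal.ofReal_toReal hyt).symm
      rw [hx', hy', Kone_ofReal hB hBA]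
      apply div_nonpos_of_nonpos_of_nonneg (H1_one_nonpos hB hBA) (by positivity)

lemma Ktwo_cont : Continuous Ktwo :=
  continuous_const.mul (th2_cont.mul th_cont)

lemma abs_sub_le_one {u v : ℝ} (h0u : 0 ≤ u) (h1u : u ≤ 1) (h0v : 0 ≤ v) (h1v : v ≤ 1) :
    |u - v| ≤ 1 := abs_le.2 ⟨by linarith, by linarith⟩

lemma continuousAt_squeeze {f g : ℝ≥0∞ × ℝ≥0∞ → ℝ} (hb : ∀ p, ‖f p‖ ≤ g p)
    (hg : Continuous g) {pt : ℝ≥0∞ × ℝ≥0∞} (h0 : g pt = 0) (hf0 : f pt = 0) :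
    ContinuousAt f pt := by
  rw [ContinuousAt, hf0]
  exact squeeze_zero_norm hb (h0 ▸ hg.continuousAt)

lemma max_cont : Continuous fun p : ℝ≥0∞ × ℝ≥0∞ => max p.1 p.2 := continuous_max
lemma min_cont : Continuous fun p : ℝ≥0∞ × ℝ≥0∞ => min p.1 p.2 := continuous_min

lemma Kone_cont : Continuous fun p : ℝ≥0∞ × ℝ≥0∞ => Kone p.1 p.2 := by
  have hadd : Continuous fun p : ℝ≥0∞ × ℝ≥0∞ => p.1 + p.2 := continuous_add
  -- third term is globally continuous
  have h3 : Continuous fun p : ℝ≥0∞ × ℝ≥0∞ => 4 * th (min p.1 p.2) :=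
    continuous_const.mul (th_cont.comp min_cont)
  -- F1 and F2
  set F1 : ℝ≥0∞ × ℝ≥0∞ → ℝ := fun p =>
    2*(rho (max p.1 p.2 - min p.1 p.2) - rho (p.1+p.2)) * rho (max p.1 p.2) with hF1
  set F2 : ℝ≥0∞ × ℝ≥0∞ → ℝ := fun p =>
    2*(mm p.1 p.2 * th (max p.1 p.2 - min p.1 p.2) * th (p.1+p.2)) * rho (max p.1 p.2) with hF2
  have hsubCA : ∀ pt : ℝ≥0∞ × ℝ≥0∞, max pt.1 pt.2 ≠ ∞ →
      ContinuousAt (fun p : ℝ≥0∞ × ℝ≥0∞ => max p.1 p.2 - min p.1 p.2) pt := by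
    intro pt h
    exact ENNReal.Tendsto.sub max_cont.continuousAt min_cont.continuousAt (Or.inl h)
  have hF1c : Continuous F1 := by
    rw [continuous_iff_continuousAt]
    intro pt
    rcases eq_or_ne (max pt.1 pt.2) ∞ with h | h
    · apply continuousAt_squeeze (g := fun p => 2 * rho (max p.1 p.2))
      · intro p
        rw [hF1]
        have h1 := rho_nonneg (max p.1 p.2 - min p.1 p.2)
        have h2 := rho_le_one (max p.1 p.2 - min p.1 p.2)
        have h3 := rho_nonneg (p.1 + p.2)
        have h4 := rho_le_one (p.1 + p.2)
        have h5 := rho_nonneg (max p.1 p.2)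
        have habs := abs_sub_le_one h1 h2 h3 h4
        calc ‖2*(rho (max p.1 p.2 - min p.1 p.2) - rho (p.1+p.2)) * rho (max p.1 p.2)‖
            = 2 * |rho (max p.1 p.2 - min p.1 p.2) - rho (p.1+p.2)| * rho (max p.1 p.2) := by
              rw [Real.norm_eq_abs, abs_mul, abs_mul, abs_of_nonneg h5, abs_two]
          _ ≤ 2 * 1 * rho (max p.1 p.2) := by
              apply mul_le_mul_of_nonneg_right _ h5
              nlinarith
          _ = 2 * rho (max p.1 p.2) := by ring
      · exact continuous_const.mul (rho_cont.comp max_cont)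
      · simp [h, rho_top]
      · simp [hF1, h, rho_top]
    · apply ContinuousAt.mul
      apply ContinuousAt.mul continuousAt_const
      · exact ((rho_cont.continuousAt).comp (hsubCA pt h)).sub
          ((rho_cont.continuousAt).comp hadd.continuousAt)
      · exact (rho_cont.continuousAt).comp max_cont.continuousAt
  have hF2c : Continuous F2 := by
    rw [continuous_iff_continuousAt]
    intro pt
    have bound : ∀ p : ℝ≥0∞ × ℝ≥0∞, ‖F2 p‖ ≤
        2 * (th (p.1 + p.2) * rho (max p.1 p.2)) := by
      intro p
      have h1 := mm_nonneg p.1 p.2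
      have h2 := mm_le_one p.1 p.2
      have h3 := th_nonneg (max p.1 p.2 - min p.1 p.2)
      have h4 := th_le_one (max p.1 p.2 - min p.1 p.2)
      have h5 := th_nonneg (p.1 + p.2)
      have h6 := th_le_one (p.1 + p.2)
      have h7 := rho_nonneg (max p.1 p.2)
      have h8 := rho_le_one (max p.1 p.2)
      rw [hF2, Real.norm_eq_abs, abs_of_nonneg (by positivity)]
      have h9 : mm p.1 p.2 * th (max p.1 p.2 - min p.1 p.2) ≤ 1 := mul_le_one₀ h2 h3 h4
      have h10 : mm p.1 p.2 * th (max p.1 p.2 - min p.1 p.2)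
          * (th (p.1 + p.2) * rho (max p.1 p.2)) ≤ th (p.1 + p.2) * rho (max p.1 p.2) :=
        mul_le_of_le_one_left (mul_nonneg h5 h7) h9
      calc 2 * (mm p.1 p.2 * th (max p.1 p.2 - min p.1 p.2) * th (p.1 + p.2)) * rho (max p.1 p.2)
          = 2 * (mm p.1 p.2 * th (max p.1 p.2 - min p.1 p.2)
              * (th (p.1 + p.2) * rho (max p.1 p.2))) := by ring
        _ ≤ 2 * (th (p.1 + p.2) * rho (max p.1 p.2)) := by linarith
    rcases eq_or_ne (max pt.1 pt.2) ∞ with h | h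
    · apply continuousAt_squeeze (g := fun p => 2 * (th (p.1 + p.2) * rho (max p.1 p.2)))
        bound (continuous_const.mul ((th_cont.comp hadd).mul (rho_cont.comp max_cont)))
      · simp [h, rho_top]
      · simp [hF2, h, rho_top]
    · rcases eq_or_ne (max pt.1 pt.2) 0 with h0 | h0
      · have hx : pt.1 = 0 := le_antisymm (h0 ▸ le_max_left _ _) bot_le
        have hy : pt.2 = 0 := le_antisymm (h0 ▸ le_max_right _ _) bot_le
        apply continuousAt_squeeze (g := fun p => 2 * (th (p.1 + p.2) * rho (max p.1 p.2)))
          bound (continuous_const.mul ((th_cont.comp hadd).mul (rho_cont.comp max_cont)))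
        · simp [hx, hy, th_zero]
        · simp [hF2, hx, hy, th_zero]
      · -- interior-type point : max finite and nonzero
        have hxt : pt.1 ≠ ∞ := fun hh => h (by simp [hh])
        have hyt : pt.2 ≠ ∞ := fun hh => h (by simp [hh])
        have hminne : min pt.1 pt.2 ≠ ∞ := fun hh => hxt (by
          have := min_le_left pt.1 pt.2
          exact (by simpa [hh] using (hh ▸ this : (∞:ℝ≥0∞) ≤ pt.1) : pt.1 = ∞))
        have hmmCA : ContinuousAt (fun p : ℝ≥0∞ × ℝ≥0∞ => mm p.1 p.2) pt := by
          apply (ENNReal.tendsto_toReal ?_).comp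
          · apply ENNReal.Tendsto.mul min_cont.continuousAt ?_
              ((continuous_inv.comp max_cont).continuousAt) ?_
            · right; simp [ENNReal.inv_ne_top, h0]
            · right; exact hminne
          · exact ENNReal.mul_ne_top hminne (by simp [ENNReal.inv_ne_top, h0])
        apply ContinuousAt.mul
        apply ContinuousAt.mul continuousAt_const
        · exact (hmmCA.mul ((th_cont.continuousAt).comp (hsubCA pt h))).mul
            ((th_cont.continuousAt).comp hadd.continuousAt)
        · exact (rho_cont.continuousAt).comp max_cont.continuousAt
  have : (fun p : ℝ≥0∞ × ℝ≥0∞ => Kone p.1 p.2)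
      = fun p => F1 p + F2 p - 4 * th (min p.1 p.2) := by
    funext p; rw [Kone, hF1, hF2]
  rw [this]
  exact (hF1c.add hF2c).sub h3

/-- Restriction of a test function on the extended half line `[0,∞] = ℝ≥0∞`
to the finite part `[0,∞)`. -/
def restr (φ : ℝ≥0∞ → ℝ) : ℝ → ℝ := fun p => φ (ENNReal.ofReal p)

/-- `K` is the continuous extension to `[0,∞]²` of `H¹_φ(p₁,p₂)/(p₁p₂)`. -/
def IsH1Ext (φ : ℝ≥0∞ → ℝ) (K : ℝ≥0∞ → ℝ≥0∞ → ℝ) : Prop :=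
  Continuous (Function.uncurry K) ∧
    ∀ p₁ p₂ : ℝ, 0 < p₂ → p₂ < p₁ →
      K (ENNReal.ofReal p₁) (ENNReal.ofReal p₂) = H1 (restr φ) p₁ p₂ / (p₁ * p₂)

/-- `K` is the continuous extension to `[0,∞]` of the diagonal kernel `H²_φ(p,p)/p²`. -/
def IsH2Ext (φ : ℝ≥0∞ → ℝ) (K : ℝ≥0∞ → ℝ) : Prop :=
  Continuous K ∧ ∀ p : ℝ, 0 < p → K (ENNReal.ofReal p) = H2 (restr φ) p p / (p * p)

def phiC (c : ℝ) : ℝ≥0∞ → ℝ := fun x => rho (ENNReal.ofReal c * x)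

def KoneC (c : ℝ) (x y : ℝ≥0∞) : ℝ := c⁻¹ * Kone (ENNReal.ofReal c * x) (ENNReal.ofReal c * y)

def KtwoC (c : ℝ) (x : ℝ≥0∞) : ℝ := c⁻¹ * Ktwo (ENNReal.ofReal c * x)

lemma phiC_cont (c : ℝ) : Continuous (phiC c) :=
  rho_cont.comp (ENNReal.continuous_const_mul ENNReal.ofReal_ne_top)

lemma phiC_nonneg (c : ℝ) (x : ℝ≥0∞) : 0 ≤ phiC c x := rho_nonneg _
lemma phiC_le_one (c : ℝ) (x : ℝ≥0∞) : phiC c x ≤ 1 := rho_le_one _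

lemma rho_anti : Antitone rho := by
  intro z w h
  apply ENNReal.toReal_mono
  · rw [ENNReal.inv_ne_top]; simp [add_eq_zero]
  · exact ENNReal.inv_le_inv' (by gcongr)

lemma phiC_anti (c : ℝ) : Antitone (phiC c) := fun z w h => rho_anti (by gcongr)

lemma phiC_ofReal {c p : ℝ} (hc : 0 ≤ c) (hp : 0 ≤ p) :
    phiC c (ENNReal.ofReal p) = 1/(1+c*p) := by
  rw [phiC, ← ENNReal.ofReal_mul hc, rho_ofReal (by positivity)]

lemma KoneC_nonpos {c : ℝ} (hc : 0 < c) {x y : ℝ≥0∞} (h : y < x) : KoneC c x y ≤ 0 := by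
  apply mul_nonpos_of_nonneg_of_nonpos (by positivity)
  apply Kone_nonpos
  rw [ENNReal.mul_lt_mul_iff_right (by simp [hc]) ENNReal.ofReal_ne_top]
  exact h

lemma KtwoC_nonpos {c : ℝ} (hc : 0 < c) (x : ℝ≥0∞) : KtwoC c x ≤ 0 :=
  mul_nonpos_of_nonneg_of_nonpos (by positivity) (Ktwo_nonpos _)

lemma restr_phiC {c p : ℝ} (hc : 0 ≤ c) (hp : 0 ≤ p) :
    restr (phiC c) p = 1/(1+c*p) := phiC_ofReal hc hp

lemma H1_restr_phiC {c a b : ℝ} (hc : 0 ≤ c) (hb : 0 < b) (hba : b < a) :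
    H1 (restr (phiC c)) a b = H1 (fun p => 1/(1+c*p)) a b := by
  simp only [H1]
  rw [restr_phiC hc (by linarith), restr_phiC hc (by linarith),
    restr_phiC hc hb.le, restr_phiC hc (by linarith)]

lemma isH1Ext_KoneC {c : ℝ} (hc : 0 < c) : IsH1Ext (phiC c) (KoneC c) := by
  constructor
  · have hmul : Continuous fun x : ℝ≥0∞ => ENNReal.ofReal c * x :=
      ENNReal.continuous_const_mul ENNReal.ofReal_ne_top
    have h : Function.uncurry (KoneC c) = fun q : ℝ≥0∞ × ℝ≥0∞ =>
        c⁻¹ * Kone (ENNReal.ofReal c * q.1) (ENNReal.ofReal c * q.2) := rfl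
    have h2 : (fun q : ℝ≥0∞ × ℝ≥0∞ => Kone (ENNReal.ofReal c * q.1) (ENNReal.ofReal c * q.2))
        = (fun p : ℝ≥0∞ × ℝ≥0∞ => Kone p.1 p.2) ∘
          (fun q : ℝ≥0∞ × ℝ≥0∞ => (ENNReal.ofReal c * q.1, ENNReal.ofReal c * q.2)) := rfl
    rw [h]
    apply continuous_const.mul
    rw [h2]
    exact Kone_cont.comp ((hmul.comp continuous_fst).prodMk (hmul.comp continuous_snd))
  · intro a b hb hba
    have ha : 0 < a := hb.trans hba
    have hcb : 0 < c*b := by positivity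
    have hcab : c*b < c*a := by nlinarith
    have e1 : ENNReal.ofReal c * ENNReal.ofReal a = ENNReal.ofReal (c*a) :=
      (ENNReal.ofReal_mul hc.le).symm
    have e2 : ENNReal.ofReal c * ENNReal.ofReal b = ENNReal.ofReal (c*b) :=
      (ENNReal.ofReal_mul hc.le).symm
    rw [KoneC, e1, e2, Kone_ofReal hcb hcab, H1_restr_phiC hc.le hb hba, H1_scale hc.ne']
    generalize H1 (fun p => 1/(1+p)) (c*a) (c*b) = X
    field_simp

lemma isH2Ext_KtwoC {c : ℝ} (hc : 0 < c) : IsH2Ext (phiC c) (KtwoC c) := by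
  constructor
  · exact continuous_const.mul
      (Ktwo_cont.comp (ENNReal.continuous_const_mul ENNReal.ofReal_ne_top))
  · intro p hp
    have hcp : 0 < c*p := by positivity
    have e1 : ENNReal.ofReal c * ENNReal.ofReal p = ENNReal.ofReal (c*p) :=
      (ENNReal.ofReal_mul hc.le).symm
    have hres : H2 (restr (phiC c)) p p = H2 (fun q => 1/(1+c*q)) p p := by
      simp only [H2]
      rw [restr_phiC hc.le (by linarith), restr_phiC hc.le hp.le]
    rw [KtwoC, e1, Ktwo_ofReal hcp, hres, H2_scale hc.ne']
    generalize H2 (fun q => 1/(1+q)) (c*p) (c*p) = X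
    field_simp

/-- The collision terms
`2 ∬_{p₁>p₂≥0} K₁ dμ dμ + ∬_{p₁=p₂≥0} K₂ dμ dμ`. -/
def collInt (μ : Measure ℝ≥0∞) (K₁ : ℝ≥0∞ → ℝ≥0∞ → ℝ) (K₂ : ℝ≥0∞ → ℝ) : ℝ :=
  2 * ∫ p₁, (∫ p₂, (if p₂ < p₁ then K₁ p₁ p₂ else 0) ∂μ) ∂μ
    + ∫ p₁, (∫ p₂, (if p₁ = p₂ then K₂ p₁ else 0) ∂μ) ∂μ

lemma collInt_nonpos (μ : Measure ℝ≥0∞) (K₁ : ℝ≥0∞ → ℝ≥0∞ → ℝ) (K₂ : ℝ≥0∞ → ℝ)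
    (h1 : ∀ x y, y < x → K₁ x y ≤ 0) (h2 : ∀ x, K₂ x ≤ 0) :
    collInt μ K₁ K₂ ≤ 0 := by
  have A : (∫ p₁, (∫ p₂, (if p₂ < p₁ then K₁ p₁ p₂ else 0) ∂μ) ∂μ) ≤ 0 := by
    apply integral_nonpos
    intro x
    apply integral_nonpos
    intro y
    by_cases h : y < x
    · simpa [h] using h1 x y h
    · simp [h]
  have B : (∫ p₁, (∫ p₂, (if p₁ = p₂ then K₂ p₁ else 0) ∂μ) ∂μ) ≤ 0 := by
    apply integral_nonpos
    intro x
    apply integral_nonpos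
    intro y
    by_cases h : x = y
    · simpa [h] using h2 y
    · simp [h]
  calc collInt μ K₁ K₂ = 2 * (∫ p₁, (∫ p₂, (if p₂ < p₁ then K₁ p₁ p₂ else 0) ∂μ) ∂μ)
        + ∫ p₁, (∫ p₂, (if p₁ = p₂ then K₂ p₁ else 0) ∂μ) ∂μ := rfl
    _ ≤ 0 := by linarith

lemma integrable_of_le_one {μ : Measure ℝ≥0∞} [IsFiniteMeasure μ] {f : ℝ≥0∞ → ℝ}
    (hf : Continuous f) (h0 : ∀ x, 0 ≤ f x) (h1 : ∀ x, f x ≤ 1) : Integrable f μ := by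
  apply (integrable_const (1:ℝ)).mono' hf.aestronglyMeasurable
  filter_upwards with x
  rw [Real.norm_eq_abs, abs_of_nonneg (h0 x)]
  exact h1 x

/-- The weak formulation of the isotropic 3-wave kinetic equation for acoustic waves for
one (time dependent) test function `φ` with time derivative `Dφ`: for every `t ≥ 0` and
every pair of continuous extensions `K₁ s, K₂ s` of the kernels `H¹_{φ(s,·)}/(p₁p₂)`,
`H²_{φ(s,·)}/(p₁p₂)` on `[0,t]`,
`∫ φ(t,·) dν(t) - ∫ φ(0,·) dν(0) = ∫₀ᵗ (∫ ∂ₛφ dν(s) + collision terms) ds`. -/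
def WeakIdentity (ν : ℝ → Measure ℝ≥0∞) (φ Dφ : ℝ → ℝ≥0∞ → ℝ) : Prop :=
  ∀ t : ℝ, 0 ≤ t →
    ∀ (K₁ : ℝ → ℝ≥0∞ → ℝ≥0∞ → ℝ) (K₂ : ℝ → ℝ≥0∞ → ℝ),
      (∀ s ∈ Set.Icc 0 t, IsH1Ext (φ s) (K₁ s)) →
      (∀ s ∈ Set.Icc 0 t, IsH2Ext (φ s) (K₂ s)) →
      (∫ p, φ t p ∂(ν t)) - (∫ p, φ 0 p ∂(ν 0))
        = ∫ s in (0 : ℝ)..t, ((∫ p, Dφ s p ∂(ν s)) + collInt (ν s) (K₁ s) (K₂ s))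

/-- A weak solution (in the sense of Definition 8 of the paper, case (i)) of the isotropic
3-wave kinetic equation for acoustic waves, written for the energy measure `ν(t)` on the
extended half line `[0,∞] = ℝ≥0∞`: `ν` is a weak-*-continuous family of finite nonnegative
measures with `ν(0) = ν₀` satisfying the weak formulation for all test functions
`φ ∈ C¹([0,∞); C([0,∞]))`. -/
structure IsWeakSolution (ν : ℝ → Measure ℝ≥0∞) (ν₀ : Measure ℝ≥0∞) : Prop where
  finite : ∀ t : ℝ, IsFiniteMeasure (ν t)
  init : ν 0 = ν₀
  weakStarCont : ∀ ψ : C(ℝ≥0∞, ℝ), ContinuousOn (fun t => ∫ p, ψ p ∂(ν t)) (Set.Ici 0)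
  eqn : ∀ φ Dφ : ℝ → C(ℝ≥0∞, ℝ),
    (∀ s : ℝ, HasDerivAt φ (Dφ s) s) → Continuous Dφ →
    WeakIdentity ν (fun s p => φ s p) (fun s p => Dφ s p)

lemma integral_phiC_mono {ν : ℝ → Measure ℝ≥0∞} {ν₀ : Measure ℝ≥0∞}
    (hsol : IsWeakSolution ν ν₀) {c : ℝ} (hc : 0 < c) {t : ℝ} (ht : 0 ≤ t) :
    (∫ p, phiC c p ∂(ν t)) ≤ ∫ p, phiC c p ∂ν₀ := by
  have hW := hsol.eqn (fun _ => ⟨phiC c, phiC_cont c⟩) (fun _ => 0)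
    (fun s => hasDerivAt_const s _) continuous_const
  have h := hW t ht (fun _ => KoneC c) (fun _ => KtwoC c)
    (fun s _ => isH1Ext_KoneC hc) (fun s _ => isH2Ext_KtwoC hc)
  simp only [ContinuousMap.coe_mk, ContinuousMap.zero_apply] at h
  rw [hsol.init] at h
  have hRHS : (∫ s in (0:ℝ)..t,
      ((∫ _, (0:ℝ) ∂(ν s)) + collInt (ν s) (KoneC c) (KtwoC c))) ≤ 0 := by
    rw [intervalIntegral.integral_of_le ht]
    apply integral_nonpos
    intro s
    simp only [integral_zero, zero_add]
    exact collInt_nonpos _ _ _ (fun x y hxy => KoneC_nonpos hc hxy) (KtwoC_nonpos hc)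
  linarith [h ▸ hRHS]

/-- A solution is nontrivial when the initial energy is not entirely concentrated
at `{∞}`. -/
def NontrivialSol (ν₀ : Measure ℝ≥0∞) : Prop := 0 < ν₀ (Set.Iio ⊤)

lemma exists_small_delta (ν₀ : Measure ℝ≥0∞) [IsFiniteMeasure ν₀] (h0 : ν₀ {0} = 0)
    {η : ℝ} (hη : 0 < η) :
    ∃ δ : ℝ, 0 < δ ∧ (ν₀ (Set.Iio (ENNReal.ofReal δ))).toReal ≤ η := by
  set s : ℕ → Set ℝ≥0∞ := fun n => Set.Iio (((n:ℝ≥0∞)+1)⁻¹) with hs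
  have hanti : Antitone s := by
    intro n m hnm
    apply Set.Iio_subset_Iio
    have hcast : (n:ℝ≥0∞) ≤ m := by exact_mod_cast hnm
    exact ENNReal.inv_le_inv' (add_le_add_left hcast 1)
  have hiInter : (⋂ n, s n) = {0} := by
    ext x
    simp only [Set.mem_iInter, hs, Set.mem_Iio, Set.mem_singleton_iff]
    constructor
    · intro hx
      by_contra hx0
      obtain ⟨n, hn⟩ := ENNReal.exists_inv_nat_lt hx0
      have h1 : ((n:ℝ≥0∞)+1)⁻¹ ≤ ((n:ℝ≥0∞))⁻¹ := ENNReal.inv_le_inv' le_self_add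
      exact absurd ((hx n).trans_le h1) (not_lt.mpr hn.le)
    · intro hx
      subst hx
      intro n
      exact ENNReal.inv_pos.mpr (by simp)
  have htend := tendsto_measure_iInter_atTop (μ := ν₀)
    (fun n => measurableSet_Iio.nullMeasurableSet) hanti ⟨0, measure_ne_top _ _⟩
  rw [hiInter, h0] at htend
  have hev : ∀ᶠ n in atTop, (ν₀ ∘ s) n < ENNReal.ofReal η :=
    htend.eventually_lt_const (by simp [hη])
  obtain ⟨n, hn⟩ := hev.exists
  refine ⟨1/((n:ℝ)+1), by positivity, ?_⟩
  have hle : ENNReal.ofReal (1/((n:ℝ)+1)) ≤ ((n:ℝ≥0∞)+1)⁻¹ := by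
    rw [one_div, ENNReal.ofReal_inv_of_pos (by positivity)]
    apply ENNReal.inv_le_inv'
    rw [ENNReal.ofReal_add (by positivity) zero_le_one]
    simp [ENNReal.ofReal_natCast]
  have hsub : ν₀ (Set.Iio (ENNReal.ofReal (1/((n:ℝ)+1)))) ≤ ν₀ (s n) :=
    measure_mono (Set.Iio_subset_Iio hle)
  apply ENNReal.toReal_le_of_le_ofReal hη.le
  exact hsub.trans hn.le

/-- for every nontrivial weak solution with `ν₀({0}) = 0` and total energy
`E = ν₀([0,∞])`, for every `ε ∈ (0,1)` there exists `Rε > 0` with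
`ν(t)([0,Rε)) ≤ ε·E` for all `t ≥ 0`. -/
theorem statement13 (ν₀ : Measure ℝ≥0∞) [IsFiniteMeasure ν₀]
    (ν : ℝ → Measure ℝ≥0∞) (hsol : IsWeakSolution ν ν₀) (hnt : NontrivialSol ν₀)
    (h0 : ν₀ {0} = 0) (ε : ℝ) (hε₀ : 0 < ε) (hε₁ : ε < 1) :
    ∃ Rε : ℝ, 0 < Rε ∧ ∀ t : ℝ, 0 ≤ t →
      ν t (Set.Iio (ENNReal.ofReal Rε)) ≤ ENNReal.ofReal ε * ν₀ Set.univ := by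
  have hEtop : ν₀ Set.univ ≠ ∞ := measure_ne_top _ _
  have hEne : 0 < ν₀ Set.univ := lt_of_lt_of_le hnt (measure_mono (Set.subset_univ _))
  set E := (ν₀ Set.univ).toReal with hE
  have hEpos : 0 < E := ENNReal.toReal_pos hEne.ne' hEtop
  obtain ⟨δ, hδpos, hδ⟩ := exists_small_delta ν₀ h0 (by positivity : (0:ℝ) < ε*E/4)
  set c := 4/(ε*δ) with hc
  have hcpos : 0 < c := by positivity
  refine ⟨1/c, by positivity, ?_⟩
  intro t ht
  haveI := hsol.finite t
  have hint_t : Integrable (phiC c) (ν t) :=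
    integrable_of_le_one (phiC_cont c) (phiC_nonneg c) (phiC_le_one c)
  have hint_0 : Integrable (phiC c) ν₀ :=
    integrable_of_le_one (phiC_cont c) (phiC_nonneg c) (phiC_le_one c)
  -- lower bound (Markov)
  have hval_r : phiC c (ENNReal.ofReal (1/c)) = 1/2 := by
    rw [phiC_ofReal hcpos.le (by positivity)]
    rw [mul_one_div, div_self hcpos.ne']
    norm_num
  have hlow : (1/2) * (ν t (Set.Iio (ENNReal.ofReal (1/c)))).toReal
      ≤ ∫ p, phiC c p ∂(ν t) := by
    have h1 : (1/2) * (ν t (Set.Iio (ENNReal.ofReal (1/c)))).toReal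
        ≤ ∫ p in Set.Iio (ENNReal.ofReal (1/c)), phiC c p ∂(ν t) := by
      apply setIntegral_ge_of_const_le_real measurableSet_Iio (measure_ne_top _ _)
      · intro x hx
        rw [← hval_r]
        exact phiC_anti c (le_of_lt hx)
      · exact hint_t.integrableOn
    exact h1.trans (setIntegral_le_integral hint_t (.of_forall (phiC_nonneg c)))
  -- upper bound
  have hub : ∫ p, phiC c p ∂ν₀ ≤ ε*E/4 + (ε/4)*E := by
    rw [← integral_add_compl (measurableSet_Iio
      (a := ENNReal.ofReal δ)) hint_0]
    have hub1 : ∫ p in Set.Iio (ENNReal.ofReal δ), phiC c p ∂ν₀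
        ≤ (ν₀ (Set.Iio (ENNReal.ofReal δ))).toReal := by
      have := integral_mono (μ := ν₀.restrict (Set.Iio (ENNReal.ofReal δ)))
        hint_0.integrableOn (integrable_const 1) (fun x => phiC_le_one c x)
      simpa [Measure.real] using this
    have hvalδ : phiC c (ENNReal.ofReal δ) ≤ ε/4 := by
      have hcd : c*δ = 4/ε := by rw [hc]; field_simp
      rw [phiC_ofReal hcpos.le hδpos.le, hcd]
      have h4ε : (0:ℝ) < 4/ε := by positivity
      have h14 : 1/(1+4/ε) ≤ 1/(4/ε) := by
        apply one_div_le_one_div_of_le h4ε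
        linarith
      have h15 : (1:ℝ)/(4/ε) = ε/4 := by
        rw [one_div_div]
      linarith
    have hub2 : ∫ p in (Set.Iio (ENNReal.ofReal δ))ᶜ, phiC c p ∂ν₀ ≤ (ε/4) * E := by
      have hb : ∀ x ∈ (Set.Iio (ENNReal.ofReal δ))ᶜ, phiC c x ≤ ε/4 := by
        intro x hx
        rw [Set.mem_compl_iff, Set.mem_Iio, not_lt] at hx
        exact le_trans (phiC_anti c hx) hvalδ
      calc ∫ p in (Set.Iio (ENNReal.ofReal δ))ᶜ, phiC c p ∂ν₀
          ≤ ∫ _ in (Set.Iio (ENNReal.ofReal δ))ᶜ, (ε/4) ∂ν₀ :=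
            setIntegral_mono_on hint_0.integrableOn (integrable_const _)
              measurableSet_Iio.compl hb
        _ = (ν₀ ((Set.Iio (ENNReal.ofReal δ))ᶜ)).toReal * (ε/4) := by
            rw [setIntegral_const]; rfl
        _ ≤ E * (ε/4) := by
            apply mul_le_mul_of_nonneg_right _ (by positivity)
            exact ENNReal.toReal_mono hEtop (measure_mono (Set.subset_univ _))
        _ = (ε/4) * E := by ring
    linarith [hub1, hub2, hδ]
  -- conclusion
  have hmono := integral_phiC_mono hsol hcpos ht
  have key : (ν t (Set.Iio (ENNReal.ofReal (1/c)))).toReal ≤ ε*E := by linarith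
  calc ν t (Set.Iio (ENNReal.ofReal (1/c)))
      = ENNReal.ofReal ((ν t (Set.Iio (ENNReal.ofReal (1/c)))).toReal) :=
        (ENNReal.ofReal_toReal (measure_ne_top _ _)).symm
    _ ≤ ENNReal.ofReal (ε*E) := ENNReal.ofReal_le_ofReal key
    _ = ENNReal.ofReal ε * ENNReal.ofReal E := ENNReal.ofReal_mul hε₀.le
    _ = ENNReal.ofReal ε * ν₀ Set.univ := by rw [hE, ENNReal.ofReal_toReal hEtop]
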